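/- If x ∈ L is not a torsion element (i.e., m·x ≠ 0 in L for every nonzero integer m), then S is a finitely generated module over its Veronese subring S^x. -/

import Mathlib

noncomputable section
open MvPolynomial

def LRel (ι : Type) [DecidableEq ι] (p : ι → ℕ) : AddSubgroup (Option ι → ℤ) :=
  AddSubgroup.closure
    { v | ∃ i : ι, v = (p i : ℤ) • Pi.single (some i) 1 - Pi.single (none : Option ι) 1 }

abbrev LGroup (ι : Type) [DecidableEq ι] (p : ι → ℕ) : Type :=
  (Option ι → ℤ) ⧸ LRel ι p

def egen {ι : Type} [DecidableEq ι] (p : ι → ℕ) (i : ι) : LGroup ι p :=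
  QuotientAddGroup.mk (Pi.single (some i) 1)

def cgen {ι : Type} [DecidableEq ι] (p : ι → ℕ) : LGroup ι p :=
  QuotientAddGroup.mk (Pi.single (none : Option ι) 1)

def Lplus {ι : Type} [DecidableEq ι] (p : ι → ℕ) : AddSubmonoid (LGroup ι p) :=
  AddSubmonoid.closure (Set.range (egen p))

abbrev SPoly (ι : Type) : Type := MvPolynomial (ι ⊕ Fin 2) ℂ

def SIdl (ι : Type) (p : ι → ℕ) (c0 c1 : ι → ℂ) : Ideal (SPoly ι) :=
  Ideal.span { f | ∃ i : ι,
    f = X (Sum.inl i) ^ (p i) - (C (c0 i) * X (Sum.inr 0) + C (c1 i) * X (Sum.inr 1)) }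

abbrev SAlg (ι : Type) (p : ι → ℕ) (c0 c1 : ι → ℂ) : Type := SPoly ι ⧸ SIdl ι p c0 c1

def wtA {ι : Type} [Fintype ι] [DecidableEq ι] (p : ι → ℕ) (m : (ι ⊕ Fin 2) →₀ ℕ) :
    LGroup ι p :=
  (∑ i : ι, m (Sum.inl i) • egen p i) + (m (Sum.inr 0) + m (Sum.inr 1)) • cgen p

def polyCompA {ι : Type} [Fintype ι] [DecidableEq ι] (p : ι → ℕ) (y : LGroup ι p) :
    Submodule ℂ (SPoly ι) where
  carrier := { f | ∀ m, coeff m f ≠ 0 → wtA p m = y }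
  add_mem' := by
    intro f g hf hg m hm
    by_cases h : coeff m f = 0
    · refine hg m fun h' => hm ?_
      simp [coeff_add, h, h']
    · exact hf m h
  zero_mem' := by
    intro m hm
    simp at hm
  smul_mem' := by
    intro c f hf m hm
    refine hf m fun h => hm ?_
    simp [coeff_smul, h]

def SCompA {ι : Type} [Fintype ι] [DecidableEq ι] (p : ι → ℕ) (c0 c1 : ι → ℂ)
    (y : LGroup ι p) : Submodule ℂ (SAlg ι p c0 c1) :=
  (polyCompA p y).map (Ideal.Quotient.mkₐ ℂ (SIdl ι p c0 c1)).toLinearMap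

def SVerA {ι : Type} [Fintype ι] [DecidableEq ι] (p : ι → ℕ) (c0 c1 : ι → ℂ)
    (x : LGroup ι p) : Submodule ℂ (SAlg ι p c0 c1) :=
  ⨆ k : ℤ, SCompA p c0 c1 (k • x)

def SShiftA {ι : Type} [Fintype ι] [DecidableEq ι] (p : ι → ℕ) (c0 c1 : ι → ℂ)
    (y x : LGroup ι p) : Submodule ℂ (SAlg ι p c0 c1) :=
  ⨆ k : ℤ, SCompA p c0 c1 (y + k • x)

section Aux
variable {ι : Type} [Fintype ι] [DecidableEq ι] (p : ι → ℕ)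

def Nprod : ℕ := ∏ i, p i

lemma p_dvd_Nprod (i : ι) : p i ∣ Nprod p := Finset.dvd_prod_of_mem p (Finset.mem_univ i)

def phiHom : (Option ι → ℤ) →+ ℤ where
  toFun v := (Nprod p : ℤ) * v none + ∑ i, ((Nprod p / p i : ℕ) : ℤ) * v (some i)
  map_zero' := by simp
  map_add' := by
    intro a b
    simp only [Pi.add_apply, mul_add, Finset.sum_add_distrib]
    ring

lemma phiHom_rel : LRel ι p ≤ (phiHom p).ker := by
  rw [LRel, AddSubgroup.closure_le]
  rintro v ⟨i, rfl⟩
  simp only [SetLike.mem_coe, AddMonoidHom.mem_ker, map_sub, AddMonoidHom.map_zsmul]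
  have h1 : phiHom p (Pi.single (some i) 1) = ((Nprod p / p i : ℕ) : ℤ) := by
    simp only [phiHom, AddMonoidHom.coe_mk, ZeroHom.coe_mk]
    rw [Pi.single_eq_of_ne (by simp : (none : Option ι) ≠ some i)]
    rw [Finset.sum_eq_single i]
    · simp [Pi.single_eq_same]
    · intro j _ hj
      rw [Pi.single_eq_of_ne (by simpa using hj), mul_zero]
    · simp
  have h2 : phiHom p (Pi.single (none : Option ι) 1) = (Nprod p : ℤ) := by
    simp only [phiHom, AddMonoidHom.coe_mk, ZeroHom.coe_mk]
    rw [Pi.single_eq_same]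
    rw [Finset.sum_eq_zero]
    · simp
    · intro j _
      rw [Pi.single_eq_of_ne (by simp), mul_zero]
  rw [h1, h2]
  have : ((Nprod p / p i : ℕ) : ℤ) * (p i : ℤ) = (Nprod p : ℤ) := by
    rw [← Nat.cast_mul, Nat.div_mul_cancel (p_dvd_Nprod p i)]
  rw [smul_eq_mul, mul_comm, this, sub_self]

def phiL : LGroup ι p →+ ℤ :=
  QuotientAddGroup.lift (LRel ι p) (phiHom p) (phiHom_rel p)

lemma rel_e (i : ι) : (p i : ℤ) • egen p i = cgen p := by
  have hmem : ((p i : ℤ) • Pi.single (some i) 1 - Pi.single (none : Option ι) 1) ∈ LRel ι p :=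
    AddSubgroup.subset_closure ⟨i, rfl⟩
  have : ((QuotientAddGroup.mk ((p i : ℤ) • Pi.single (some i) 1 - Pi.single (none : Option ι) 1) : LGroup ι p)) = 0 :=
    (QuotientAddGroup.eq_zero_iff _).mpr hmem
  rw [QuotientAddGroup.mk_sub] at this
  have h2 : (QuotientAddGroup.mk ((p i : ℤ) • Pi.single (some i) 1) : LGroup ι p)
      = (p i : ℤ) • egen p i := rfl
  rw [h2] at this
  have := sub_eq_zero.mp this
  exact this

lemma key_identity (y : LGroup ι p) : (Nprod p : ℤ) • y = phiL p y • cgen p := by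
  let f₁ : (Option ι → ℤ) →ₗ[ℤ] LGroup ι p :=
    (Nprod p : ℤ) • (QuotientAddGroup.mk' (LRel ι p)).toIntLinearMap
  let f₂ : (Option ι → ℤ) →ₗ[ℤ] LGroup ι p :=
    (LinearMap.toSpanSingleton ℤ _ (cgen p)).comp (phiHom p).toIntLinearMap
  have hfe : f₁ = f₂ := by
    apply Module.Basis.ext (Pi.basisFun ℤ (Option ι))
    intro j
    have hb : (Pi.basisFun ℤ (Option ι)) j = Pi.single j 1 := by
      simp [Pi.basisFun_apply]
    rw [hb]
    cases j with
    | none =>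
        show (Nprod p : ℤ) • (QuotientAddGroup.mk' (LRel ι p) (Pi.single none 1))
            = phiHom p (Pi.single none 1) • cgen p
        have h2 : phiHom p (Pi.single (none : Option ι) 1) = (Nprod p : ℤ) := by
          simp only [phiHom, AddMonoidHom.coe_mk, ZeroHom.coe_mk]
          rw [Pi.single_eq_same, Finset.sum_eq_zero]
          · simp
          · intro j _; rw [Pi.single_eq_of_ne (by simp), mul_zero]
        rw [h2]; rfl
    | some i =>
        show (Nprod p : ℤ) • (QuotientAddGroup.mk' (LRel ι p) (Pi.single (some i) 1))
            = phiHom p (Pi.single (some i) 1) • cgen p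
        have h1 : phiHom p (Pi.single (some i) 1) = ((Nprod p / p i : ℕ) : ℤ) := by
          simp only [phiHom, AddMonoidHom.coe_mk, ZeroHom.coe_mk]
          rw [Pi.single_eq_of_ne (by simp : (none : Option ι) ≠ some i)]
          rw [Finset.sum_eq_single i]
          · simp [Pi.single_eq_same]
          · intro j _ hj
            rw [Pi.single_eq_of_ne (by simpa using hj), mul_zero]
          · simp
        rw [h1, ← rel_e p i, smul_smul, ← Nat.cast_mul,
          Nat.div_mul_cancel (p_dvd_Nprod p i)]
        rfl
  obtain ⟨v, rfl⟩ := QuotientAddGroup.mk'_surjective (LRel ι p) y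
  have := congrFun (congrArg (fun g => g.toFun) hfe) v
  simpa [f₁, f₂, phiL] using this

lemma exists_multiple (hp : ∀ i, 2 ≤ p i) (x : LGroup ι p)
    (hx : ∀ m : ℤ, m ≠ 0 → m • x ≠ 0) (y : LGroup ι p) :
    ∃ k : ℕ, 0 < k ∧ ∃ l : ℤ, (k : ℤ) • y = l • x := by
  have hN : 0 < Nprod p := Finset.prod_pos (fun i _ => lt_of_lt_of_le two_pos (hp i))
  set a := phiL p x with ha
  have hane : a ≠ 0 := by
    intro h
    have hk := key_identity p x
    rw [← ha, h, zero_zsmul] at hk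
    exact hx (Nprod p) (by exact_mod_cast hN.ne') hk
  refine ⟨Nprod p * a.natAbs, by positivity, ?_⟩
  have hkey : (Nprod p : ℤ) • y = phiL p y • cgen p := key_identity p y
  have hkeyx : (Nprod p : ℤ) • x = a • cgen p := key_identity p x
  have hc : ((Nprod p * a.natAbs : ℕ) : ℤ) • y = ((a.natAbs : ℤ) * (Nprod p : ℤ)) • y := by
    norm_cast
    rw [mul_comm]
  rw [hc, mul_zsmul, hkey, ← mul_zsmul]
  rcases Int.natAbs_eq a with h | h
  · refine ⟨phiL p y * Nprod p, ?_⟩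
    rw [← h, show a * phiL p y = phiL p y * a by ring, mul_zsmul, ← hkeyx, ← mul_zsmul]
  · refine ⟨-phiL p y * Nprod p, ?_⟩
    rw [show ((a.natAbs : ℤ)) = -a by omega,
      show -a * phiL p y = -phiL p y * a by ring, mul_zsmul, ← hkeyx, ← mul_zsmul]

end Aux

section Main
variable {ι : Type} [Fintype ι] [DecidableEq ι] (p : ι → ℕ) (c0 c1 : ι → ℂ)

lemma wtA_nsmul (k : ℕ) (m : (ι ⊕ Fin 2) →₀ ℕ) : wtA p (k • m) = k • wtA p m := by
  unfold wtA
  rw [nsmul_add, ← Finset.sum_nsmul]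
  congr 1
  · apply Finset.sum_congr rfl
    intro i _
    rw [Finsupp.smul_apply, smul_eq_mul, mul_comm, mul_nsmul]
  · rw [Finsupp.smul_apply, Finsupp.smul_apply, smul_eq_mul, smul_eq_mul, ← mul_add,
      mul_comm, mul_nsmul]

lemma wtA_single (j : ι ⊕ Fin 2) (k : ℕ) :
    wtA p (Finsupp.single j k) = k • wtA p (Finsupp.single j 1) := by
  rw [← wtA_nsmul, Finsupp.smul_single', mul_one]


lemma pow_mem_R {n : ℕ} (p : Fin n → ℕ) (hp : ∀ i, 2 ≤ p i) (c0 c1 : Fin n → ℂ)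
    (x : LGroup (Fin n) p) (hx : ∀ m : ℤ, m ≠ 0 → m • x ≠ 0)
    (j : Fin n ⊕ Fin 2) :
    ∃ k : ℕ, 0 < k ∧ (Ideal.Quotient.mkₐ ℂ (SIdl (Fin n) p c0 c1) (X j)) ^ k ∈
      SVerA p c0 c1 x := by
  obtain ⟨k, hk, l, hl⟩ := exists_multiple p hp x hx (wtA p (Finsupp.single j 1))
  refine ⟨k, hk, ?_⟩
  have hmem : (X j : SPoly (Fin n)) ^ k ∈ polyCompA p (l • x) := by
    intro m hm
    rw [X_pow_eq_monomial, coeff_monomial] at hm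
    by_cases h : Finsupp.single j k = m
    · rw [← h, wtA_single, ← natCast_zsmul, hl]
    · rw [if_neg h] at hm; exact absurd rfl hm
  have hpow : (Ideal.Quotient.mkₐ ℂ (SIdl (Fin n) p c0 c1) (X j)) ^ k
      = Ideal.Quotient.mkₐ ℂ (SIdl (Fin n) p c0 c1) ((X j) ^ k) := (map_pow _ _ _).symm
  rw [hpow]
  refine le_iSup (fun l : ℤ => SCompA p c0 c1 (l • x)) l ?_
  exact ⟨(X j) ^ k, hmem, rfl⟩

end Main


/-- If `x ∈ L` is non-torsion, then `S` is a finitely generated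
module over its Veronese subring `S^x`. -/
theorem veronese_module_finite (n : ℕ) (hn : 1 ≤ n) (p : Fin n → ℕ) (hp : ∀ i, 2 ≤ p i)
    (c0 c1 : Fin n → ℂ) (hnz : ∀ i, (c0 i, c1 i) ≠ (0, 0))
    (hdist : ∀ i j : Fin n, i ≠ j → c0 i * c1 j ≠ c1 i * c0 j)
    (x : LGroup (Fin n) p) (hx : ∀ m : ℤ, m ≠ 0 → m • x ≠ 0)
    (R : Subalgebra ℂ (SAlg (Fin n) p c0 c1))
    (hR : Subalgebra.toSubmodule R = SVerA p c0 c1 x) :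
    Module.Finite ↥R (SAlg (Fin n) p c0 c1) := by
  classical
  have hXint : ∀ j, IsIntegral ↥R (Ideal.Quotient.mkₐ ℂ (SIdl (Fin n) p c0 c1) (X j)) := by
    intro j
    obtain ⟨k, hk, hmem⟩ := pow_mem_R p hp c0 c1 x hx j
    rw [← hR] at hmem
    have heq : Ideal.Quotient.mkₐ ℂ (SIdl (Fin n) p c0 c1) (X j) ^ k
        = algebraMap ↥R _ (⟨_, hmem⟩ : ↥R) := rfl
    exact IsIntegral.of_pow hk (heq ▸ isIntegral_algebraMap)
  have hCint : ∀ a : ℂ, IsIntegral ↥R (Ideal.Quotient.mkₐ ℂ (SIdl (Fin n) p c0 c1) (C a)) := by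
    intro a
    have h1 : Ideal.Quotient.mkₐ ℂ (SIdl (Fin n) p c0 c1) (C a)
        = algebraMap ↥R _ (⟨algebraMap ℂ _ a, R.algebraMap_mem a⟩ : ↥R) := rfl
    rw [h1]; exact isIntegral_algebraMap
  haveI hint : Algebra.IsIntegral ↥R (SAlg (Fin n) p c0 c1) := by
    constructor
    intro s
    obtain ⟨f, rfl⟩ := Ideal.Quotient.mkₐ_surjective ℂ (SIdl (Fin n) p c0 c1) s
    induction f using MvPolynomial.induction_on with
    | C a => exact hCint a
    | add f g hf hg => rw [map_add]; exact hf.add hg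
    | mul_X f j hf => rw [map_mul]; exact hf.mul (hXint j)
  haveI : Algebra.FiniteType ℂ (SAlg (Fin n) p c0 c1) :=
    Algebra.FiniteType.of_surjective (Ideal.Quotient.mkₐ ℂ _)
      (Ideal.Quotient.mkₐ_surjective ℂ _)
  haveI : Algebra.FiniteType ↥R (SAlg (Fin n) p c0 c1) :=
    Algebra.FiniteType.of_restrictScalars_finiteType ℂ ↥R _
  exact Algebra.IsIntegral.finite (R := ↥R) (A := SAlg (Fin n) p c0 c1)
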